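/- Let k ≥ 2, let T be a binary phylogenetic X-tree and let T̃ be an NNI neighbor of T. Let [x,y] be a cherry contained in both T and T̃, and let T^1, T̃^1 (resp. T^2, T̃^2) be the trees obtained from T and T̃ by a cherry reduction of type 1 (resp. type 2) applied to [x,y]. If A_k(T^1) = A_k(T̃^1) and A_{k−1}(T^2) = A_{k−1}(T̃^2), then A_k(T) = A_k(T̃). -/

import Mathlib

open SimpleGraph

/-- A binary phylogenetic `X`-tree: a finite tree whose leaves (vertices of degree
at most 1) are bijectively labeled by the taxa in `X` and all of whose internal
vertices have degree 3. -/
structure PhyloTree (X : Type*) where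
  V : Type*
  fintypeV : Fintype V
  G : SimpleGraph V
  isTree : G.IsTree
  leaf : X → V
  leaf_inj : Function.Injective leaf
  leaf_iff : ∀ v : V, (G.neighborSet v).ncard ≤ 1 ↔ ∃ x, leaf x = v
  binary : ∀ v : V, (G.neighborSet v).ncard = 1 ∨ (G.neighborSet v).ncard = 3

namespace PhyloTree

variable {X : Type*}

/-- The number of changing edges of an extension `g : V → Bool` on `T`. -/
noncomputable def changingNumber (T : PhyloTree X) (g : T.V → Bool) : ℕ :=
  {e ∈ T.G.edgeSet | ¬ (Sym2.map g e).IsDiag}.ncard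

/-- The parsimony score `l(f,T)` of a binary character `f : X → Bool` on `T`:
the minimal number of changing edges over all extensions of `f` on `T`. -/
noncomputable def parsimony (T : PhyloTree X) (f : X → Bool) : ℕ :=
  sInf {n : ℕ | ∃ g : T.V → Bool, (∀ x : X, g (T.leaf x) = f x) ∧ T.changingNumber g = n}

/-- `A_k(T)`: the set of binary characters with parsimony score `k` on `T`. -/
def Ak (T : PhyloTree X) (k : ℕ) : Set (X → Bool) :=
  {f | T.parsimony f = k}

/-- Leaf-label-preserving isomorphism of phylogenetic `X`-trees. -/
def Isomorphic (T T' : PhyloTree X) : Prop :=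
  ∃ φ : T.G ≃g T'.G, ∀ x : X, φ (T.leaf x) = T'.leaf x

/-- The set of leaf vertices of `T`. -/
def leafSet (T : PhyloTree X) : Set T.V := Set.range T.leaf

/-- The set of taxa lying on the `u`-side of the edge `{u,v}` of `T`. -/
def side (T : PhyloTree X) (u v : T.V) : Set X :=
  {x | (T.G.deleteEdges {s(u, v)}).Reachable (T.leaf x) u}

/-- The split sides of `T`: all taxon sets cut off by some edge of `T`. -/
def splits (T : PhyloTree X) : Set (Set X) :=
  {S | ∃ u v : T.V, T.G.Adj u v ∧ S = T.side u v}

/-- `[x,y]` is a cherry of `T`: two distinct leaves adjacent to the same vertex. -/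
def IsCherry (T : PhyloTree X) (x y : X) : Prop :=
  x ≠ y ∧ ∃ u : T.V, T.G.Adj (T.leaf x) u ∧ T.G.Adj (T.leaf y) u

end PhyloTree

/-- `T'` is the result of a type-1 cherry reduction of the cherry `[x,y]` of `T`
(delete leaf `x`, suppress the resulting degree-2 vertex), characterized via the
split systems (by Buneman's theorem this determines `T'` uniquely). -/
def IsRed1 {X : Type*} (T : PhyloTree X) (x y : X)
    (T' : PhyloTree {z : X // z ≠ x}) : Prop :=
  T.IsCherry x y ∧
  (fun S : Set {z : X // z ≠ x} => Subtype.val '' S) '' T'.splits =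
    {S : Set X | ∃ S' ∈ T.splits, S = S' \ {x}} \ {∅, ({x} : Set X)ᶜ}

/-- `T'` is the result of a type-2 cherry reduction of the cherry `[x,y]` of `T`
(delete leaves `x` and `y` and their common neighbor, suppress the resulting
degree-2 vertex), characterized via the split systems. -/
def IsRed2 {X : Type*} (T : PhyloTree X) (x y : X)
    (T' : PhyloTree {z : X // z ≠ x ∧ z ≠ y}) : Prop :=
  T.IsCherry x y ∧
  (fun S : Set {z : X // z ≠ x ∧ z ≠ y} => Subtype.val '' S) '' T'.splits =
    {S : Set X | ∃ S' ∈ T.splits, S = S' \ {x, y}} \ {∅, ({x, y} : Set X)ᶜ}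

/-- `T'` is an NNI neighbor of `T`: there is an inner edge `{u,v}` of `T`, with
the four subtrees hanging off `u` (via `a₁`, `a₂`) and `v` (via `b₁`, `b₂`),
such that `T'` arises by exchanging the subtree at `a₂` with the one at `b₂`;
characterized via split systems. -/
def IsNNINeighbor {X : Type*} (T T' : PhyloTree X) : Prop :=
  ∃ u v a₁ a₂ b₁ b₂ : T.V,
    T.G.Adj u v ∧ T.G.Adj u a₁ ∧ T.G.Adj u a₂ ∧ T.G.Adj v b₁ ∧ T.G.Adj v b₂ ∧
    a₁ ≠ a₂ ∧ a₁ ≠ v ∧ a₂ ≠ v ∧ b₁ ≠ b₂ ∧ b₁ ≠ u ∧ b₂ ≠ u ∧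
    T'.splits = (T.splits \ {T.side u v, T.side v u}) ∪
      {T.side a₁ u ∪ T.side b₂ v, T.side a₂ u ∪ T.side b₁ v}

/-- An `A`-`B`-path in a graph `G`: a path from a vertex of `A` to a vertex of `B`
none of whose interior vertices lies in `A` or `B`. -/
structure ABPath {V : Type*} (G : SimpleGraph V) (A B : Set V) where
  first : V
  last : V
  walk : G.Walk first last
  isPath : walk.IsPath
  first_mem : first ∈ A
  last_mem : last ∈ B
  interior_not_mem : ∀ v ∈ walk.support.tail.dropLast, v ∉ A ∧ v ∉ B

/-- `S` separates `A` from `B` in `G`: every `A`-`B`-path meets `S`. -/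
def IsSeparator {V : Type*} (G : SimpleGraph V) (A B S : Set V) : Prop :=
  ∀ P : ABPath G A B, ∃ v ∈ P.walk.support, v ∈ S


section GraphLemmas
variable {V : Type*} {G : SimpleGraph V}

/-- In an acyclic graph, deleting an edge disconnects its endpoints. -/
lemma tree_bridge (hT : G.IsAcyclic) {u v : V} (h : G.Adj u v) :
    ¬ (G.deleteEdges {s(u,v)}).Reachable u v := by
  have hb := (isAcyclic_iff_forall_edge_isBridge.mp hT) (G.mem_edgeSet.mpr h)
  rw [isBridge_iff] at hb
  exact hb

/-- Every vertex with a walk to `u` reaches `u` or `v` after deleting edge `{u,v}`. -/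
lemma reach_or_aux {u v : V} :
    ∀ {a : V} (_ : G.Walk a u),
      (G.deleteEdges {s(u,v)}).Reachable a u ∨ (G.deleteEdges {s(u,v)}).Reachable a v := by
  intro a p
  induction p with
  | nil => exact Or.inl (Reachable.refl _)
  | @cons a b u hab p ih =>
    by_cases he : s(a, b) = s(u, v)
    · rw [Sym2.eq_iff] at he
      rcases he with ⟨rfl, rfl⟩ | ⟨rfl, rfl⟩
      · exact Or.inl (Reachable.refl _)
      · exact Or.inr (Reachable.refl _)
    · have hadj : (G.deleteEdges {s(u,v)}).Adj a b := by
        rw [deleteEdges_adj]; exact ⟨hab, by simpa using he⟩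
      rcases ih with h1 | h1
      · exact Or.inl (hadj.reachable.trans h1)
      · exact Or.inr (hadj.reachable.trans h1)

lemma reach_or (hc : G.Connected) {u v : V} (a : V) :
    (G.deleteEdges {s(u,v)}).Reachable a u ∨ (G.deleteEdges {s(u,v)}).Reachable a v := by
  obtain ⟨p⟩ := hc.preconnected a u
  exact reach_or_aux p

/-- A set closed under adjacency contains everything reachable from it. -/
lemma closure_reach {C : Set V} (hC : ∀ c ∈ C, ∀ w, G.Adj c w → w ∈ C)
    {a b : V} (hab : G.Reachable a b) (ha : a ∈ C) : b ∈ C := by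
  obtain ⟨p⟩ := hab
  induction p with
  | nil => exact ha
  | @cons a c b hac p ih => exact ih (hC a ha c hac)

/-- If `g` differs at the ends of a path, some changing edge separates the two ends. -/
lemma changing_edge_separates (g : V → Bool) :
    ∀ {a b : V} (p : G.Walk a b) (_ : p.IsPath) (_ : g a ≠ g b),
      ∃ u v, G.Adj u v ∧ g u ≠ g v ∧
        (G.deleteEdges {s(u,v)}).Reachable a u ∧ (G.deleteEdges {s(u,v)}).Reachable b v := by
  intro a b p
  induction p with
  | nil => intro _ h; exact absurd rfl h
  | @cons a c b hac p ih =>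
    intro hp hgab
    by_cases hg : g a = g c
    · obtain ⟨u, v, huv, hguv, h1, h2⟩ := ih (((Walk.cons_isPath_iff hac p).mp hp)).1 (hg ▸ hgab)
      refine ⟨u, v, huv, hguv, ?_, h2⟩
      have hne : s(a, c) ≠ s(u, v) := by
        intro he
        rw [Sym2.eq_iff] at he
        rcases he with ⟨rfl, rfl⟩ | ⟨rfl, rfl⟩
        · exact hguv (hg)
        · exact hguv (hg.symm)
      have hadj : (G.deleteEdges {s(u,v)}).Adj a c := by
        rw [deleteEdges_adj]; exact ⟨hac, by simpa using hne⟩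
      exact hadj.reachable.trans h1
    · refine ⟨a, c, hac, hg, Reachable.refl _, ?_⟩
      have hsupp : a ∉ p.support := (((Walk.cons_isPath_iff hac p).mp hp)).2
      have hedges : ∀ e ∈ p.edges, e ∉ ({s(a,c)} : Set (Sym2 V)) := by
        intro e he hmem
        simp only [Set.mem_singleton_iff] at hmem
        subst hmem
        exact hsupp (Walk.fst_mem_support_of_mem_edges p he)
      exact (Walk.reverse (p.toDeleteEdges _ hedges)).reachable

end GraphLemmas

section GraphLemmas
variable {V : Type*} {G : SimpleGraph V}

lemma isolated_reach (h : ∀ w, ¬ G.Adj v w) {u : V} (hr : G.Reachable v u) : u = v := by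
  obtain ⟨p⟩ := hr
  cases p with
  | nil => rfl
  | cons hadj q => exact absurd hadj (h _)

end GraphLemmas

/-- Covering condition for a family of splits. -/
def Covers {X : Type*} (P : Set X) (f : X → Bool) (Fam : Set (Set X)) : Prop :=
  ∀ a ∈ P, ∀ b ∈ P, f a ≠ f b → ∃ S ∈ Fam, ((a ∈ S) ↔ b ∉ S)

/-- The minimum size of a covering subfamily of `Sigs`. -/
noncomputable def coverNum {X : Type*} (Sigs : Set (Set X)) (P : Set X) (f : X → Bool) : ℕ :=
  sInf {n | ∃ Fam, Fam ⊆ Sigs ∧ Fam.Finite ∧ Fam.ncard = n ∧ Covers P f Fam}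

namespace PhyloTree
variable {X : Type*} (T : PhyloTree X)

lemma finiteV : Finite T.V := by haveI := T.fintypeV; infer_instance

lemma changingNumber_eq (g : T.V → Bool) :
    T.changingNumber g = {e ∈ T.G.edgeSet | ¬ (Sym2.map g e).IsDiag}.ncard := rfl

/-- From an edge cut separating differently-colored leaves, build an extension
constant on components of the cut graph. -/
lemma exists_ext (f : X → Bool) (E' : Set (Sym2 T.V))
    (hsep : ∀ a b : X, f a ≠ f b → ¬ (T.G.deleteEdges E').Reachable (T.leaf a) (T.leaf b)) :
    ∃ g : T.V → Bool, (∀ z, g (T.leaf z) = f z) ∧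
      (∀ u v, (T.G.deleteEdges E').Reachable u v → g u = g v) := by
  classical
  refine ⟨fun w => decide (∃ a, f a = true ∧ (T.G.deleteEdges E').Reachable (T.leaf a) w),
    fun z => ?_, fun u v huv => ?_⟩
  · cases hz : f z with
    | true => simp only [decide_eq_true_iff]; exact ⟨z, hz, Reachable.refl _⟩
    | false =>
      simp only [decide_eq_false_iff_not]
      rintro ⟨a, ha, hr⟩
      exact hsep a z (by simp [ha, hz]) hr
  · simp only [decide_eq_decide]
    constructor
    · rintro ⟨a, ha, hr⟩; exact ⟨a, ha, hr.trans huv⟩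
    · rintro ⟨a, ha, hr⟩; exact ⟨a, ha, hr.trans huv.symm⟩

lemma changing_subset (g : T.V → Bool) (E' : Set (Sym2 T.V))
    (hg : ∀ u v, (T.G.deleteEdges E').Reachable u v → g u = g v) :
    {e ∈ T.G.edgeSet | ¬ (Sym2.map g e).IsDiag} ⊆ E' := by
  intro e he
  induction e with
  | _ u v =>
    obtain ⟨hadj, hdiag⟩ := he
    rw [Sym2.map_pair_eq, Sym2.mk_isDiag_iff] at hdiag
    by_contra hE
    exact hdiag (hg u v (Adj.reachable (by rw [deleteEdges_adj]; exact ⟨hadj, hE⟩)))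

lemma parsimony_le (f : X → Bool) (g : T.V → Bool) (hext : ∀ z, g (T.leaf z) = f z) :
    T.parsimony f ≤ T.changingNumber g :=
  Nat.sInf_le ⟨g, hext, rfl⟩

lemma exists_opt (f : X → Bool) :
    ∃ g : T.V → Bool, (∀ z, g (T.leaf z) = f z) ∧ T.changingNumber g = T.parsimony f := by
  have hne : {n : ℕ | ∃ g : T.V → Bool, (∀ x : X, g (T.leaf x) = f x) ∧
      T.changingNumber g = n}.Nonempty := by
    obtain ⟨g, hext, -⟩ := T.exists_ext f T.G.edgeSet (by
      intro a b hab hr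
      have : (T.G.deleteEdges T.G.edgeSet) = ⊥ := by
        rw [deleteEdges_edgeSet]; exact sdiff_self
      rw [this, reachable_bot] at hr
      exact hab (congrArg f (T.leaf_inj hr)))
    exact ⟨_, g, hext, rfl⟩
  obtain ⟨g, hext, hval⟩ := Nat.sInf_mem hne
  exact ⟨g, hext, hval⟩

end PhyloTree

namespace PhyloTree
variable {X : Type*} (T : PhyloTree X)

lemma mem_side {a : X} {u v : T.V} :
    a ∈ T.side u v ↔ (T.G.deleteEdges {s(u, v)}).Reachable (T.leaf a) u := Iff.rfl

lemma side_swap_graph (u v : T.V) :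
    (T.G.deleteEdges {s(v, u)}) = (T.G.deleteEdges {s(u, v)}) := by
  rw [Sym2.eq_swap]

lemma not_bridge_reach {u v : T.V} (h : T.G.Adj u v) :
    ¬ (T.G.deleteEdges {s(u,v)}).Reachable u v :=
  tree_bridge T.isTree.IsAcyclic h

/-- Every taxon lies on exactly one side of an edge. -/
lemma mem_side_iff_not {a : X} {u v : T.V} (h : T.G.Adj u v) :
    a ∈ T.side v u ↔ a ∉ T.side u v := by
  rw [mem_side, mem_side, side_swap_graph]
  constructor
  · intro hv hu
    exact T.not_bridge_reach h (hu.symm.trans hv)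
  · intro hu
    rcases reach_or T.isTree.isConnected (u := u) (v := v) (T.leaf a) with h1 | h1
    · exact absurd h1 hu
    · exact h1

lemma side_mem_splits {u v : T.V} (h : T.G.Adj u v) : T.side u v ∈ T.splits :=
  ⟨u, v, h, rfl⟩

/-- A labeled leaf has a unique neighbor. -/
lemma leaf_unique_nbr (z : X) : ∃ p, T.G.neighborSet (T.leaf z) = {p} := by
  have h1 : (T.G.neighborSet (T.leaf z)).ncard ≤ 1 := (T.leaf_iff _).mpr ⟨z, rfl⟩
  have h2 : (T.G.neighborSet (T.leaf z)).ncard = 1 := by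
    rcases T.binary (T.leaf z) with h | h
    · exact h
    · omega
  exact Set.ncard_eq_one.mp h2

/-- An internal vertex (degree 3) is not a leaf. -/
lemma leaf_ne_of_ncard {p : T.V} (hp : (T.G.neighborSet p).ncard = 3) (z : X) :
    T.leaf z ≠ p := by
  intro h
  have := (T.leaf_iff p).mpr ⟨z, h⟩
  omega

/-- Structure around a cherry. -/
lemma cherry_data {x y : X} (hc : T.IsCherry x y) :
    ∃ p q : T.V, T.G.Adj (T.leaf x) p ∧ T.G.Adj (T.leaf y) p ∧ T.G.Adj p q ∧
      q ≠ T.leaf x ∧ q ≠ T.leaf y ∧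
      T.G.neighborSet (T.leaf x) = {p} ∧ T.G.neighborSet (T.leaf y) = {p} ∧
      T.G.neighborSet p = {T.leaf x, T.leaf y, q} := by
  obtain ⟨hxy, p, hxp, hyp⟩ := hc
  have hlne : T.leaf x ≠ T.leaf y := fun h => hxy (T.leaf_inj h)
  have hp3 : (T.G.neighborSet p).ncard = 3 := by
    rcases T.binary p with h | h
    · obtain ⟨a, ha⟩ := Set.ncard_eq_one.mp h
      have h1 : T.leaf x ∈ T.G.neighborSet p := hxp.symm
      have h2 : T.leaf y ∈ T.G.neighborSet p := hyp.symm
      rw [ha] at h1 h2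
      exact absurd (h1.trans h2.symm) hlne
    · exact h
  have hfin : (T.G.neighborSet p).Finite := by
    haveI := T.finiteV; exact Set.toFinite _
  obtain ⟨q, hq, hqx, hqy⟩ : ∃ q ∈ T.G.neighborSet p, q ≠ T.leaf x ∧ q ≠ T.leaf y := by
    by_contra hcon
    push_neg at hcon
    have hsub : T.G.neighborSet p ⊆ {T.leaf x, T.leaf y} := by
      intro w hw
      rcases Classical.em (w = T.leaf x) with h | h
      · exact Or.inl h
      · exact Or.inr (hcon w hw h)
    have := Set.ncard_le_ncard hsub ((Set.finite_singleton _).insert _)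
    have h2 : ({T.leaf x, T.leaf y} : Set T.V).ncard ≤ 2 :=
      (Set.ncard_insert_le _ _).trans (by simp)
    omega
  refine ⟨p, q, hxp, hyp, hq, hqx, hqy, ?_, ?_, ?_⟩
  · obtain ⟨p', hp'⟩ := T.leaf_unique_nbr x
    have : p ∈ T.G.neighborSet (T.leaf x) := hxp
    rw [hp'] at this
    rw [hp', this]
  · obtain ⟨p', hp'⟩ := T.leaf_unique_nbr y
    have : p ∈ T.G.neighborSet (T.leaf y) := hyp
    rw [hp'] at this
    rw [hp', this]
  · have hqp : q ≠ p := fun h => (T.G.irrefl (h ▸ hq))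
    have hsub : ({T.leaf x, T.leaf y, q} : Set T.V) ⊆ T.G.neighborSet p := by
      intro w hw
      rcases hw with rfl | rfl | rfl
      · exact hxp.symm
      · exact hyp.symm
      · exact hq
    refine (Set.eq_of_subset_of_ncard_le hsub ?_ hfin).symm
    have h3 : ({T.leaf x, T.leaf y, q} : Set T.V).ncard = 3 := by
      rw [Set.ncard_insert_of_notMem (by simp [hlne, Ne.symm hqx]),
        Set.ncard_insert_of_notMem (by simp [Ne.symm hqy]), Set.ncard_singleton]
    omega

end PhyloTree

namespace PhyloTree
variable {X : Type*} (T : PhyloTree X)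

/-- A leaf is isolated in any graph where its unique pendant edge is deleted. -/
lemma leaf_isolated {z : X} {p : T.V} (hnb : T.G.neighborSet (T.leaf z) = {p})
    (E' : Set (Sym2 T.V)) (hE : s(T.leaf z, p) ∈ E') {w : T.V}
    (hr : (T.G.deleteEdges E').Reachable (T.leaf z) w) : w = T.leaf z := by
  refine isolated_reach (fun w hw => ?_) hr
  rw [deleteEdges_adj] at hw
  have : w ∈ T.G.neighborSet (T.leaf z) := hw.1
  rw [hnb] at this
  subst this
  exact hw.2 hE

lemma side_pendant {z : X} {p : T.V} (hadj : T.G.Adj (T.leaf z) p)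
    (hnb : T.G.neighborSet (T.leaf z) = {p}) :
    T.side (T.leaf z) p = {z} := by
  ext a
  simp only [mem_side, Set.mem_singleton_iff]
  constructor
  · intro h
    exact T.leaf_inj (T.leaf_isolated hnb {s(T.leaf z, p)} (Set.mem_singleton _) h.symm)
  · rintro rfl
    exact Reachable.refl _

lemma side_pendant' {z : X} {p : T.V} (hadj : T.G.Adj (T.leaf z) p)
    (hnb : T.G.neighborSet (T.leaf z) = {p}) :
    T.side p (T.leaf z) = {z}ᶜ := by
  ext a
  rw [Set.mem_compl_iff, Set.mem_singleton_iff,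
    T.mem_side_iff_not hadj, T.side_pendant hadj hnb]
  simp

section Cherry

variable {x y : X} {p q : T.V} (hxy : x ≠ y)
  (hxp : T.G.Adj (T.leaf x) p) (hyp : T.G.Adj (T.leaf y) p) (hpq : T.G.Adj p q)
  (hqx : q ≠ T.leaf x) (hqy : q ≠ T.leaf y)
  (hnx : T.G.neighborSet (T.leaf x) = {p}) (hny : T.G.neighborSet (T.leaf y) = {p})
  (hnp : T.G.neighborSet p = {T.leaf x, T.leaf y, q})

include hxy hxp hyp hpq hqx hqy hnx hny hnp

lemma side_cherry : T.side p q = {x, y} := by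
  have hxe : s(T.leaf x, p) ≠ s(p, q) := by
    intro he
    rcases Sym2.eq_iff.mp he with ⟨h1, -⟩ | ⟨h1, -⟩
    · exact T.G.irrefl (h1 ▸ hxp)
    · exact hqx h1.symm
  have hye : s(T.leaf y, p) ≠ s(p, q) := by
    intro he
    rcases Sym2.eq_iff.mp he with ⟨h1, -⟩ | ⟨h1, -⟩
    · exact T.G.irrefl (h1 ▸ hyp)
    · exact hqy h1.symm
  ext a
  simp only [mem_side, Set.mem_insert_iff, Set.mem_singleton_iff]
  constructor
  · intro h
    have hC : ∀ c ∈ ({p, T.leaf x, T.leaf y} : Set T.V), ∀ w,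
        (T.G.deleteEdges {s(p,q)}).Adj c w → w ∈ ({p, T.leaf x, T.leaf y} : Set T.V) := by
      rintro c (rfl | rfl | rfl) w hw <;> rw [deleteEdges_adj] at hw
      · have hmem : w ∈ T.G.neighborSet c := hw.1
        rw [hnp] at hmem
        rcases hmem with rfl | rfl | rfl
        · exact Or.inr (Or.inl rfl)
        · exact Or.inr (Or.inr rfl)
        · exact absurd rfl hw.2
      · have hmem : w ∈ T.G.neighborSet (T.leaf x) := hw.1
        rw [hnx] at hmem
        exact Or.inl hmem
      · have hmem : w ∈ T.G.neighborSet (T.leaf y) := hw.1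
        rw [hny] at hmem
        exact Or.inl hmem
    have := closure_reach hC h.symm (Or.inl rfl)
    rcases this with h1 | h1 | h1
    · exfalso
      have hlne : T.leaf x ≠ T.leaf y := fun h => hxy (T.leaf_inj h)
      have h3 : (T.G.neighborSet p).ncard = 3 := by
        rw [hnp, Set.ncard_insert_of_notMem (by simp [hlne, Ne.symm hqx]),
          Set.ncard_insert_of_notMem (by simp [Ne.symm hqy]), Set.ncard_singleton]
      exact T.leaf_ne_of_ncard h3 a h1
    · exact Or.inl (T.leaf_inj h1)
    · exact Or.inr (T.leaf_inj h1)
  · rintro (rfl | rfl)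
    · exact Adj.reachable (by rw [deleteEdges_adj]; exact ⟨hxp, by simpa using hxe⟩)
    · exact Adj.reachable (by rw [deleteEdges_adj]; exact ⟨hyp, by simpa using hye⟩)

lemma side_cherry' : T.side q p = {x, y}ᶜ := by
  ext a
  rw [Set.mem_compl_iff, T.mem_side_iff_not hpq,
    T.side_cherry hxy hxp hyp hpq hqx hqy hnx hny hnp]

end Cherry

end PhyloTree

lemma sym2_out_eq {V : Type*} (e : Sym2 V) : s(e.out.1, e.out.2) = e := by
  exact e.out_eq

namespace PhyloTree
variable {X : Type*} (T : PhyloTree X)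

/-- Canonical side of an edge. -/
noncomputable def outSide (e : Sym2 T.V) : Set X := T.side e.out.1 e.out.2

lemma outSide_spec {u v : T.V} (h : T.G.Adj u v) {a b : X}
    (hra : (T.G.deleteEdges {s(u,v)}).Reachable (T.leaf a) u)
    (hrb : (T.G.deleteEdges {s(u,v)}).Reachable (T.leaf b) v) :
    (a ∈ T.outSide s(u,v) ↔ b ∉ T.outSide s(u,v)) := by
  have houtm : s((s(u,v) : Sym2 T.V).out.1, (s(u,v) : Sym2 T.V).out.2) = s(u,v) :=
    sym2_out_eq _
  have haS : a ∈ T.side u v := hra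
  have hbS : b ∉ T.side u v := by
    intro hb
    exact T.not_bridge_reach h (Reachable.trans (Reachable.symm (T.mem_side.mp hb)) hrb)
  rcases Sym2.eq_iff.mp houtm with ⟨h1, h2⟩ | ⟨h1, h2⟩
  · unfold outSide
    rw [h1, h2]
    exact iff_of_true haS (fun hb => hbS hb)
  · unfold outSide
    rw [h1, h2]
    have hbS' : b ∈ T.side v u := by
      rw [mem_side, side_swap_graph]; exact hrb
    have haS' : a ∉ T.side v u := by
      intro ha
      rw [mem_side, side_swap_graph] at ha
      exact T.not_bridge_reach h (Reachable.trans (Reachable.symm hra) ha)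
    exact iff_of_false haS' (fun hcon => hcon hbS')

lemma outSide_mem_splits {e : Sym2 T.V} (he : e ∈ T.G.edgeSet) : T.outSide e ∈ T.splits := by
  refine ⟨e.out.1, e.out.2, ?_, rfl⟩
  rw [← T.G.mem_edgeSet, sym2_out_eq e]
  exact he

/-- The family of canonical sides of changing edges of an extension is a covering. -/
lemma cover_of_ext (f : X → Bool) (g : T.V → Bool) (hext : ∀ z, g (T.leaf z) = f z) :
    ∃ Fam, Fam ⊆ T.splits ∧ Fam.Finite ∧ Fam.ncard ≤ T.changingNumber g ∧
      Covers Set.univ f Fam := by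
  haveI := T.finiteV
  haveI : DecidableEq T.V := Classical.decEq _
  set E' := {e ∈ T.G.edgeSet | ¬ (Sym2.map g e).IsDiag} with hE'
  refine ⟨T.outSide '' E', ?_, (E'.toFinite.image _), Set.ncard_image_le E'.toFinite, ?_⟩
  · rintro S ⟨e, he, rfl⟩
    exact T.outSide_mem_splits he.1
  · intro a _ b _ hab
    have hgab : g (T.leaf a) ≠ g (T.leaf b) := by rw [hext, hext]; exact hab
    obtain ⟨w⟩ := T.isTree.isConnected.preconnected (T.leaf a) (T.leaf b)
    obtain ⟨u, v, huv, hguv, hra, hrb⟩ :=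
      changing_edge_separates g w.toPath.val w.toPath.prop hgab
    refine ⟨T.outSide s(u,v), ⟨s(u,v), ⟨T.G.mem_edgeSet.mpr huv, ?_⟩, rfl⟩, ?_⟩
    · rw [Sym2.map_pair_eq, Sym2.mk_isDiag_iff]; exact hguv
    · exact T.outSide_spec huv hra hrb

/-- Any covering subfamily of the splits yields an extension with few changes. -/
lemma parsimony_le_cover (f : X → Bool) (Fam : Set (Set X)) (hsub : Fam ⊆ T.splits)
    (hfin : Fam.Finite) (hcov : Covers Set.univ f Fam) :
    T.parsimony f ≤ Fam.ncard := by
  classical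
  haveI := T.finiteV
  have hchoice : ∀ S ∈ Fam, ∃ e : Sym2 T.V, ∃ u v, e = s(u,v) ∧ T.G.Adj u v ∧ S = T.side u v := by
    intro S hS
    obtain ⟨u, v, huv, hSuv⟩ := hsub hS
    exact ⟨s(u,v), u, v, rfl, huv, hSuv⟩
  have hV : Nonempty T.V := T.isTree.isConnected.nonempty
  haveI : DecidableEq (Set X) := Classical.decEq _
  haveI : ∀ (S : Set X), Decidable (S ∈ Fam) := fun S => Classical.propDecidable _
  obtain ⟨v₀⟩ := hV
  set eOf : Set X → Sym2 T.V := fun S =>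
    if h : S ∈ Fam then (hchoice S h).choose else s(v₀, v₀) with heOf
  set E' := eOf '' Fam with hE'
  have hsep : ∀ a b : X, f a ≠ f b →
      ¬ (T.G.deleteEdges E').Reachable (T.leaf a) (T.leaf b) := by
    intro a b hab hr
    obtain ⟨S, hS, hiff⟩ := hcov a trivial b trivial hab
    obtain ⟨u, v, heq, huv, hSuv⟩ := (hchoice S hS).choose_spec
    have heS : s(u,v) ∈ E' := by
      refine ⟨S, hS, ?_⟩
      rw [heOf]; simp only [hS, dif_pos]; exact heq
    have hmono : (T.G.deleteEdges E') ≤ (T.G.deleteEdges {s(u,v)}) :=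
      deleteEdges_anti (by simpa using heS)
    have hr' := hr.mono hmono
    rcases reach_or T.isTree.isConnected (u := u) (v := v) (T.leaf a) with ha1 | ha1 <;>
      rcases reach_or T.isTree.isConnected (u := u) (v := v) (T.leaf b) with hb1 | hb1
    · -- both reach u : then a ∈ S and b ∈ S, contradicting hiff
      have haS : a ∈ S := by rw [hSuv]; exact ha1
      have hbS : b ∈ S := by rw [hSuv]; exact hb1
      exact (hiff.mp haS) hbS
    · exact T.not_bridge_reach huv (ha1.symm.trans (hr'.trans hb1))
    · exact T.not_bridge_reach huv (hb1.symm.trans (hr'.symm.trans ha1))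
    · have haS : a ∉ S := by
        rw [hSuv]; intro hmem
        exact T.not_bridge_reach huv ((T.mem_side.mp hmem).symm.trans ha1)
      have hbS : b ∉ S := by
        rw [hSuv]; intro hmem
        exact T.not_bridge_reach huv ((T.mem_side.mp hmem).symm.trans hb1)
      exact haS (hiff.mpr hbS)
  obtain ⟨g, hext, hconst⟩ := T.exists_ext f E' hsep
  have hchsub := T.changing_subset g E' hconst
  calc T.parsimony f ≤ T.changingNumber g := T.parsimony_le f g hext
    _ ≤ E'.ncard := by
        rw [changingNumber_eq]
        exact Set.ncard_le_ncard hchsub (Set.toFinite _)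
    _ ≤ Fam.ncard := Set.ncard_image_le hfin

/-- Parsimony equals the covering number of the split system. -/
theorem parsimony_eq_coverNum (f : X → Bool) :
    T.parsimony f = coverNum T.splits Set.univ f := by
  obtain ⟨g, hext, hval⟩ := T.exists_opt f
  obtain ⟨Fam, hsub, hfin, hle, hcov⟩ := T.cover_of_ext f g hext
  have h1 : coverNum T.splits Set.univ f ≤ T.parsimony f := by
    refine le_trans (Nat.sInf_le ⟨Fam, hsub, hfin, rfl, hcov⟩) ?_
    rw [← hval]; exact hle
  have hne : {n | ∃ Fam, Fam ⊆ T.splits ∧ Fam.Finite ∧ Fam.ncard = n ∧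
      Covers Set.univ f Fam}.Nonempty := ⟨Fam.ncard, Fam, hsub, hfin, rfl, hcov⟩
  obtain ⟨Fam', hsub', hfin', hval', hcov'⟩ := Nat.sInf_mem hne
  have h2 : T.parsimony f ≤ coverNum T.splits Set.univ f := by
    rw [coverNum, ← hval']
    exact T.parsimony_le_cover f Fam' hsub' hfin' hcov'
  omega

end PhyloTree

/-- Covering numbers transfer along injective relabelings of the ground set. -/
lemma coverNum_image {Y X : Type*} (iota : Y → X) (hi : Function.Injective iota)
    (Sigs : Set (Set Y)) (f : X → Bool) :
    coverNum ((fun S => iota '' S) '' Sigs) (Set.range iota) f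
      = coverNum Sigs Set.univ (fun y => f (iota y)) := by
  have hinj : Function.Injective (fun S : Set Y => iota '' S) :=
    Set.image_injective.mpr hi
  unfold coverNum
  congr 1
  ext n
  constructor
  · rintro ⟨Fam, hsub, hfin, hn, hcov⟩
    refine ⟨{S0 ∈ Sigs | iota '' S0 ∈ Fam}, fun S hS => hS.1, ?_, ?_, ?_⟩
    · exact (hfin.preimage hinj.injOn).subset (fun S hS => hS.2)
    · have himg : (fun S : Set Y => iota '' S) '' {S0 ∈ Sigs | iota '' S0 ∈ Fam} = Fam := by
        apply Set.Subset.antisymm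
        · rintro S' ⟨S0, hS0, rfl⟩; exact hS0.2
        · intro S' hS'
          obtain ⟨S0, hS0, rfl⟩ := hsub hS'
          exact ⟨S0, ⟨hS0, hS'⟩, rfl⟩
      have := Set.ncard_image_of_injective {S0 ∈ Sigs | iota '' S0 ∈ Fam} hinj
      rw [himg] at this
      rw [← this, hn]
    · intro a _ b _ hab
      obtain ⟨S', hS', hiff⟩ := hcov (iota a) ⟨a, rfl⟩ (iota b) ⟨b, rfl⟩ hab
      obtain ⟨S0, hS0, rfl⟩ := hsub hS'
      refine ⟨S0, ⟨hS0, hS'⟩, ?_⟩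
      rwa [hi.mem_set_image, hi.mem_set_image] at hiff
  · rintro ⟨Fam0, hsub, hfin, hn, hcov⟩
    refine ⟨(fun S : Set Y => iota '' S) '' Fam0, Set.image_mono hsub, hfin.image _, ?_, ?_⟩
    · rw [Set.ncard_image_of_injective _ hinj]; exact hn
    · rintro a ⟨a0, rfl⟩ b ⟨b0, rfl⟩ hab
      obtain ⟨S0, hS0, hiff⟩ := hcov a0 trivial b0 trivial hab
      refine ⟨iota '' S0, Set.mem_image_of_mem _ hS0, ?_⟩
      rwa [hi.mem_set_image, hi.mem_set_image]

namespace PhyloTree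
variable {X : Type*} (T : PhyloTree X)

/-- Generic extraction of a covering of the reduced split system from an extension,
avoiding a prescribed set `C` of edges that never separate surviving taxa. -/
lemma cover_restrict (f : X → Bool) (R : Set X) (g : T.V → Bool)
    (hext : ∀ z, g (T.leaf z) = f z) (C : Set (Sym2 T.V))
    (hC : ∀ (a b : X), a ∉ R → b ∉ R → ∀ u v : T.V, s(u,v) ∈ C →
      ¬ ((T.G.deleteEdges {s(u,v)}).Reachable (T.leaf a) u ∧
         (T.G.deleteEdges {s(u,v)}).Reachable (T.leaf b) v)) :
    ∃ Fam, Fam ⊆ ({S : Set X | ∃ S' ∈ T.splits, S = S' \ R} \ {∅, Rᶜ}) ∧ Fam.Finite ∧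
      Fam.ncard ≤ ({e ∈ T.G.edgeSet | ¬ (Sym2.map g e).IsDiag} \ C).ncard ∧
      Covers {z : X | z ∉ R} f Fam := by
  haveI := T.finiteV
  haveI : DecidableEq T.V := Classical.decEq _
  set E' := {e ∈ T.G.edgeSet | ¬ (Sym2.map g e).IsDiag} \ C with hE'
  set D := ({S : Set X | ∃ S' ∈ T.splits, S = S' \ R} \ {∅, Rᶜ}) with hD
  refine ⟨((fun e => T.outSide e \ R) '' E') ∩ D, Set.inter_subset_right,
    ((E'.toFinite.image _).subset Set.inter_subset_left),
    le_trans (Set.ncard_le_ncard Set.inter_subset_left (E'.toFinite.image _))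
      (Set.ncard_image_le E'.toFinite), ?_⟩
  intro a ha b hb hab
  rw [Set.mem_setOf_eq] at ha hb
  have hgab : g (T.leaf a) ≠ g (T.leaf b) := by rw [hext, hext]; exact hab
  obtain ⟨w⟩ := T.isTree.isConnected.preconnected (T.leaf a) (T.leaf b)
  obtain ⟨u, v, huv, hguv, hra, hrb⟩ :=
    changing_edge_separates g w.toPath.val w.toPath.prop hgab
  have heE : s(u,v) ∈ E' := by
    refine ⟨⟨T.G.mem_edgeSet.mpr huv, ?_⟩, fun hmem => hC a b ha hb u v hmem ⟨hra, hrb⟩⟩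
    rw [Sym2.map_pair_eq, Sym2.mk_isDiag_iff]; exact hguv
  have hiff := T.outSide_spec huv hra hrb
  set S := T.outSide s(u,v) \ R with hS
  have h1 : a ∈ S ↔ a ∈ T.outSide s(u,v) := by
    rw [hS, Set.mem_diff]; exact and_iff_left ha
  have h2 : b ∈ S ↔ b ∈ T.outSide s(u,v) := by
    rw [hS, Set.mem_diff]; exact and_iff_left hb
  have hiffS : a ∈ S ↔ b ∉ S := by rw [h1, not_congr h2]; exact hiff
  refine ⟨S, ⟨⟨s(u,v), heE, rfl⟩, ⟨T.outSide s(u,v), T.outSide_mem_splits heE.1.1, rfl⟩, ?_⟩,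
    hiffS⟩
  simp only [Set.mem_insert_iff, Set.mem_singleton_iff, not_or]
  by_cases hao : a ∈ T.outSide s(u,v)
  · constructor
    · intro hS0
      rw [hS0] at h1
      exact (h1.mpr hao)
    · intro hSc
      have hbO : b ∉ T.outSide s(u,v) := hiff.mp hao
      have hbS : b ∉ S := fun hmem => hbO (h2.mp hmem)
      rw [hSc] at hbS
      exact hbS hb
  · have hbO : b ∈ T.outSide s(u,v) := by
      by_contra hbO
      exact hao (hiff.mpr hbO)
    constructor
    · intro hS0
      rw [hS0] at h2
      exact (h2.mpr hbO)
    · intro hSc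
      have haS : a ∉ S := fun hmem => hao (h1.mp hmem)
      rw [hSc] at haS
      exact haS ha

end PhyloTree

namespace PhyloTree
variable {X : Type*} (T : PhyloTree X)

/-- From a covering of the reduced split system, a small edge set separating
the surviving differently-colored leaves. -/
lemma cut_of_cover (f : X → Bool) (R : Set X) (Fam : Set (Set X)) (hfin : Fam.Finite)
    (Q : Sym2 T.V → Prop) (hcov : Covers {z : X | z ∉ R} f Fam)
    (hch : ∀ S ∈ Fam, ∃ u v : T.V, T.G.Adj u v ∧ T.side u v \ R = S ∧ Q s(u,v)) :
    ∃ E0 : Set (Sym2 T.V), E0.Finite ∧ E0.ncard ≤ Fam.ncard ∧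
      (∀ e ∈ E0, e ∈ T.G.edgeSet ∧ Q e) ∧
      ∀ (E'' : Set (Sym2 T.V)), E0 ⊆ E'' →
        ∀ a b : X, a ∉ R → b ∉ R → f a ≠ f b →
          ¬ (T.G.deleteEdges E'').Reachable (T.leaf a) (T.leaf b) := by
  classical
  haveI := T.finiteV
  have hch' : ∀ S ∈ Fam, ∃ e : Sym2 T.V, ∃ u v : T.V,
      e = s(u,v) ∧ T.G.Adj u v ∧ T.side u v \ R = S ∧ Q e := by
    intro S hS
    obtain ⟨u, v, huv, hSuv, hQ⟩ := hch S hS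
    exact ⟨s(u,v), u, v, rfl, huv, hSuv, hQ⟩
  have hV : Nonempty T.V := T.isTree.isConnected.nonempty
  obtain ⟨v₀⟩ := hV
  set eOf : Set X → Sym2 T.V := fun S =>
    if h : S ∈ Fam then (hch' S h).choose else s(v₀, v₀) with heOf
  refine ⟨eOf '' Fam, hfin.image _, Set.ncard_image_le hfin, ?_, ?_⟩
  · rintro e ⟨S, hS, rfl⟩
    obtain ⟨u, v, heq, huv, hSuv, hQ⟩ := (hch' S hS).choose_spec
    have : eOf S = (hch' S hS).choose := by rw [heOf]; simp only [hS, dif_pos]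
    rw [this, heq]
    exact ⟨T.G.mem_edgeSet.mpr huv, heq ▸ hQ⟩
  · intro E'' hsub a b ha hb hab hr
    obtain ⟨S, hS, hiff⟩ := hcov a ha b hb hab
    obtain ⟨u, v, heq, huv, hSuv, hQ⟩ := (hch' S hS).choose_spec
    have heS : s(u,v) ∈ E'' := by
      refine hsub ⟨S, hS, ?_⟩
      rw [heOf]; simp only [hS, dif_pos]; exact heq
    have hmono : (T.G.deleteEdges E'') ≤ (T.G.deleteEdges {s(u,v)}) :=
      deleteEdges_anti (by simpa using heS)
    have hr' := hr.mono hmono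
    have hmema : a ∈ S ↔ (T.G.deleteEdges {s(u,v)}).Reachable (T.leaf a) u := by
      rw [← hSuv, Set.mem_diff, and_iff_left ha]; exact T.mem_side
    have hmemb : b ∈ S ↔ (T.G.deleteEdges {s(u,v)}).Reachable (T.leaf b) u := by
      rw [← hSuv, Set.mem_diff, and_iff_left hb]; exact T.mem_side
    rcases reach_or T.isTree.isConnected (u := u) (v := v) (T.leaf a) with ha1 | ha1 <;>
      rcases reach_or T.isTree.isConnected (u := u) (v := v) (T.leaf b) with hb1 | hb1
    · exact (hiff.mp (hmema.mpr ha1)) (hmemb.mpr hb1)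
    · exact T.not_bridge_reach huv (ha1.symm.trans (hr'.trans hb1))
    · exact T.not_bridge_reach huv (hb1.symm.trans (hr'.symm.trans ha1))
    · have haS : a ∉ S := by
        rw [hmema]; intro hmem
        exact T.not_bridge_reach huv (hmem.symm.trans ha1)
      have hbS : b ∉ S := by
        rw [hmemb]; intro hmem
        exact T.not_bridge_reach huv (hmem.symm.trans hb1)
      exact haS (hiff.mpr hbS)

end PhyloTree

namespace PhyloTree
variable {X : Type*} (T : PhyloTree X)

lemma parsimony_red1 {x y : X} (hc : T.IsCherry x y) (f : X → Bool) (hf : f x = f y) :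
    T.parsimony f =
      coverNum ({S : Set X | ∃ S' ∈ T.splits, S = S' \ {x}} \ {∅, ({x} : Set X)ᶜ})
        {z : X | z ∉ ({x} : Set X)} f := by
  have hxy := hc.1
  obtain ⟨p, q, hxp, hyp, hpq, hqx, hqy, hnx, hny, hnp⟩ := T.cherry_data hc
  haveI := T.finiteV
  have hlxy : T.leaf x ≠ T.leaf y := fun h => hxy (T.leaf_inj h)
  have hsxp : T.side (T.leaf x) p = {x} := T.side_pendant hxp hnx
  have hspx : T.side p (T.leaf x) = {x}ᶜ := T.side_pendant' hxp hnx
  have hsyp : T.side (T.leaf y) p = {y} := T.side_pendant hyp hny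
  have hspy : T.side p (T.leaf y) = {y}ᶜ := T.side_pendant' hyp hny
  have hspq : T.side p q = {x, y} := T.side_cherry hxy hxp hyp hpq hqx hqy hnx hny hnp
  have hsqp : T.side q p = {x, y}ᶜ := T.side_cherry' hxy hxp hyp hpq hqx hqy hnx hny hnp
  have id2 : (({x} : Set X)ᶜ) \ {x} = ({x} : Set X)ᶜ := by
    ext z; simp [Set.mem_diff]
  have id3 : ({x, y} : Set X) \ {x} = {y} := by
    ext z
    simp only [Set.mem_diff, Set.mem_insert_iff, Set.mem_singleton_iff]
    constructor
    · rintro ⟨h | h, hne⟩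
      · exact absurd h hne
      · exact h
    · rintro rfl
      exact ⟨Or.inr rfl, Ne.symm hxy⟩
  have id4 : ({y} : Set X) \ {x} = {y} := by
    ext z
    simp only [Set.mem_diff, Set.mem_singleton_iff]
    constructor
    · rintro ⟨h, -⟩; exact h
    · rintro rfl; exact ⟨rfl, Ne.symm hxy⟩
  have id5 : (({y} : Set X)ᶜ) \ {x} = ({x, y} : Set X)ᶜ := by
    ext z
    simp only [Set.mem_diff, Set.mem_compl_iff, Set.mem_insert_iff, Set.mem_singleton_iff]
    tauto
  have id6 : (({x, y} : Set X)ᶜ) \ {x} = ({x, y} : Set X)ᶜ := by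
    ext z
    simp only [Set.mem_diff, Set.mem_compl_iff, Set.mem_insert_iff, Set.mem_singleton_iff]
    tauto
  obtain ⟨g, hext, hgval⟩ := T.exists_opt f
  obtain ⟨Fam1, hsub1, hfin1, hle1, hcov1⟩ := T.cover_restrict f {x} g hext ∅
    (by intro a b _ _ u v h; exact absurd h (Set.notMem_empty _))
  have hle1' : Fam1.ncard ≤ T.parsimony f := by
    rw [← hgval, changingNumber_eq]
    refine le_trans hle1 (le_of_eq ?_)
    rw [Set.diff_empty]
  have hd1 : coverNum ({S : Set X | ∃ S' ∈ T.splits, S = S' \ {x}} \ {∅, ({x} : Set X)ᶜ})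
      {z : X | z ∉ ({x} : Set X)} f ≤ T.parsimony f :=
    le_trans (Nat.sInf_le ⟨Fam1, hsub1, hfin1, rfl, hcov1⟩) hle1'
  have hne : {n | ∃ Fam, Fam ⊆ ({S : Set X | ∃ S' ∈ T.splits, S = S' \ {x}} \
      {∅, ({x} : Set X)ᶜ}) ∧ Fam.Finite ∧ Fam.ncard = n ∧
      Covers {z : X | z ∉ ({x} : Set X)} f Fam}.Nonempty :=
    ⟨_, Fam1, hsub1, hfin1, rfl, hcov1⟩
  obtain ⟨Fam, hsub, hfin, hn, hcov⟩ := Nat.sInf_mem hne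
  have hlift : ∀ S ∈ Fam, ∃ u v, T.G.Adj u v ∧ T.side u v \ ({x} : Set X) = S ∧
      (s(u,v) ≠ s(T.leaf x, p) ∧ s(u,v) ≠ s(T.leaf y, p)) := by
    intro S hS
    obtain ⟨⟨S', hS'sp, hSeq⟩, hSnot⟩ := hsub hS
    simp only [Set.mem_insert_iff, Set.mem_singleton_iff, not_or] at hSnot
    obtain ⟨hS0, hSc⟩ := hSnot
    obtain ⟨u, v, huv, hS'uv⟩ := hS'sp
    rw [hS'uv] at hSeq
    by_cases h1 : s(u,v) = s(T.leaf x, p)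
    · exfalso
      rcases Sym2.eq_iff.mp h1 with ⟨hu, hv⟩ | ⟨hu, hv⟩ <;> rw [hu, hv] at hSeq
      · rw [hsxp, Set.diff_self] at hSeq
        exact hS0 hSeq
      · rw [hspx, id2] at hSeq
        exact hSc hSeq
    · by_cases h2 : s(u,v) = s(T.leaf y, p)
      · rcases Sym2.eq_iff.mp h2 with ⟨hu, hv⟩ | ⟨hu, hv⟩ <;> rw [hu, hv] at hSeq
        · refine ⟨p, q, hpq, ?_, ?_, ?_⟩
          · rw [hspq, id3, hSeq, hsyp, id4]
          · intro he
            rcases Sym2.eq_iff.mp he with ⟨hp1, -⟩ | ⟨-, hq1⟩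
            · exact hxp.ne hp1.symm
            · exact hqx hq1
          · intro he
            rcases Sym2.eq_iff.mp he with ⟨hp1, -⟩ | ⟨-, hq1⟩
            · exact hyp.ne hp1.symm
            · exact hqy hq1
        · refine ⟨q, p, hpq.symm, ?_, ?_, ?_⟩
          · rw [hsqp, id6, hSeq, hspy, id5]
          · intro he
            rcases Sym2.eq_iff.mp he with ⟨hq1, -⟩ | ⟨hq1, -⟩
            · exact hqx hq1
            · exact hpq.ne' hq1
          · intro he
            rcases Sym2.eq_iff.mp he with ⟨hq1, -⟩ | ⟨hq1, -⟩
            · exact hqy hq1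
            · exact hpq.ne' hq1
      · exact ⟨u, v, huv, hSeq.symm, h1, h2⟩
  obtain ⟨E0, hE0fin, hE0le, hE0prop, hE0sep⟩ :=
    T.cut_of_cover f {x} Fam hfin (fun e => e ≠ s(T.leaf x, p) ∧ e ≠ s(T.leaf y, p)) hcov hlift
  set E' := insert s(T.leaf x, p) E0 with hE'
  have hsep : ∀ a b : X, f a ≠ f b →
      ¬ (T.G.deleteEdges E').Reachable (T.leaf a) (T.leaf b) := by
    intro a b hab hr
    by_cases hax : a = x
    · subst hax
      have := T.leaf_isolated hnx E' (Set.mem_insert _ _) hr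
      have hba : b = a := T.leaf_inj this
      exact hab (by rw [hba])
    · by_cases hbx : b = x
      · subst hbx
        have := T.leaf_isolated hnx E' (Set.mem_insert _ _) hr.symm
        have : a = b := T.leaf_inj this
        exact hab (by rw [this])
      · exact hE0sep E' (Set.subset_insert _ _) a b
          (by simpa using hax) (by simpa using hbx) hab hr
  obtain ⟨g2, hext2, hconst2⟩ := T.exists_ext f E' hsep
  have hpy_ne : s(T.leaf y, p) ∉ E' := by
    intro hmem
    rcases Set.mem_insert_iff.mp hmem with heq | hmem0
    · rcases Sym2.eq_iff.mp heq with ⟨h1, -⟩ | ⟨h1, -⟩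
      · exact hlxy h1.symm
      · exact hyp.ne h1
    · exact (hE0prop _ hmem0).2.2 rfl
  have hgp : g2 p = f x := by
    have hadj : (T.G.deleteEdges E').Adj p (T.leaf y) := by
      rw [deleteEdges_adj]
      refine ⟨hyp.symm, ?_⟩
      rw [Sym2.eq_swap]
      exact hpy_ne
    rw [hconst2 p (T.leaf y) hadj.reachable, hext2, hf]
  have hch_sub : {e ∈ T.G.edgeSet | ¬ (Sym2.map g2 e).IsDiag} ⊆ E0 := by
    intro e he
    rcases Set.mem_insert_iff.mp (T.changing_subset g2 E' hconst2 he) with heq | hmem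
    · exfalso
      rw [heq] at he
      apply he.2
      rw [Sym2.map_pair_eq, Sym2.mk_isDiag_iff, hext2, hgp]
    · exact hmem
  have hd2 : T.parsimony f ≤
      coverNum ({S : Set X | ∃ S' ∈ T.splits, S = S' \ {x}} \ {∅, ({x} : Set X)ᶜ})
        {z : X | z ∉ ({x} : Set X)} f := by
    calc T.parsimony f ≤ T.changingNumber g2 := T.parsimony_le f g2 hext2
      _ ≤ E0.ncard := by
          rw [changingNumber_eq]
          exact Set.ncard_le_ncard hch_sub hE0fin
      _ ≤ Fam.ncard := hE0le
      _ = _ := hn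
  omega

end PhyloTree

namespace PhyloTree
variable {X : Type*} (T : PhyloTree X)

lemma parsimony_red2 {x y : X} (hc : T.IsCherry x y) (f : X → Bool) (hf : f x ≠ f y) :
    T.parsimony f =
      coverNum ({S : Set X | ∃ S' ∈ T.splits, S = S' \ {x, y}} \ {∅, ({x, y} : Set X)ᶜ})
        {z : X | z ∉ ({x, y} : Set X)} f + 1 := by
  have hxy := hc.1
  obtain ⟨p, q, hxp, hyp, hpq, hqx, hqy, hnx, hny, hnp⟩ := T.cherry_data hc
  haveI := T.finiteV
  have hlxy : T.leaf x ≠ T.leaf y := fun h => hxy (T.leaf_inj h)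
  -- direction 1 : coverNum + 1 ≤ parsimony
  obtain ⟨g, hext, hgval⟩ := T.exists_opt f
  set C : Set (Sym2 T.V) := {s(T.leaf x, p), s(T.leaf y, p)} with hC
  have hCprop : ∀ (a b : X), a ∉ ({x, y} : Set X) → b ∉ ({x, y} : Set X) →
      ∀ u v : T.V, s(u,v) ∈ C →
      ¬ ((T.G.deleteEdges {s(u,v)}).Reachable (T.leaf a) u ∧
         (T.G.deleteEdges {s(u,v)}).Reachable (T.leaf b) v) := by
    intro a b ha hb u v hmem ⟨hra, hrb⟩
    simp only [Set.mem_insert_iff, Set.mem_singleton_iff, not_or] at ha hb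
    rcases Set.mem_insert_iff.mp hmem with heq | heq
    · have hxE : s(T.leaf x, p) ∈ ({s(u,v)} : Set (Sym2 T.V)) := by
        rw [Set.mem_singleton_iff, heq]
      rcases Sym2.eq_iff.mp heq with ⟨hu, -⟩ | ⟨-, hv⟩
      · rw [hu] at hra hxE
        exact ha.1 (T.leaf_inj (T.leaf_isolated hnx _ hxE hra.symm))
      · rw [hv] at hrb hxE
        exact hb.1 (T.leaf_inj (T.leaf_isolated hnx _ hxE hrb.symm))
    · rw [Set.mem_singleton_iff] at heq
      have hyE : s(T.leaf y, p) ∈ ({s(u,v)} : Set (Sym2 T.V)) := by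
        rw [Set.mem_singleton_iff, heq]
      rcases Sym2.eq_iff.mp heq with ⟨hu, -⟩ | ⟨-, hv⟩
      · rw [hu] at hra hyE
        exact ha.2 (T.leaf_inj (T.leaf_isolated hny _ hyE hra.symm))
      · rw [hv] at hrb hyE
        exact hb.2 (T.leaf_inj (T.leaf_isolated hny _ hyE hrb.symm))
  obtain ⟨Fam1, hsub1, hfin1, hle1, hcov1⟩ := T.cover_restrict f {x, y} g hext C hCprop
  set chg := {e ∈ T.G.edgeSet | ¬ (Sym2.map g e).IsDiag} with hchg
  obtain ⟨c, hcC, hcchg⟩ : ∃ c, c ∈ C ∧ c ∈ chg := by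
    by_cases hgp : g p = f x
    · refine ⟨s(T.leaf y, p), Set.mem_insert_of_mem _ rfl, T.G.mem_edgeSet.mpr hyp, ?_⟩
      rw [Sym2.map_pair_eq, Sym2.mk_isDiag_iff, hext, hgp]
      exact fun h => hf h.symm
    · refine ⟨s(T.leaf x, p), Set.mem_insert _ _, T.G.mem_edgeSet.mpr hxp, ?_⟩
      rw [Sym2.map_pair_eq, Sym2.mk_isDiag_iff, hext]
      exact fun h => hgp h.symm
  have hins : insert c (chg \ C) ⊆ chg := by
    intro e he
    rcases Set.mem_insert_iff.mp he with rfl | he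
    · exact hcchg
    · exact he.1
  have hcnot : c ∉ chg \ C := fun h => h.2 hcC
  have hcard : (chg \ C).ncard + 1 ≤ chg.ncard := by
    have h1 : (insert c (chg \ C)).ncard = (chg \ C).ncard + 1 :=
      Set.ncard_insert_of_notMem hcnot (Set.toFinite _)
    rw [← h1]
    exact Set.ncard_le_ncard hins (Set.toFinite _)
  have hd1 : coverNum ({S : Set X | ∃ S' ∈ T.splits, S = S' \ {x, y}} \
      {∅, ({x, y} : Set X)ᶜ}) {z : X | z ∉ ({x, y} : Set X)} f + 1 ≤ T.parsimony f := by
    have hA : coverNum ({S : Set X | ∃ S' ∈ T.splits, S = S' \ {x, y}} \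
        {∅, ({x, y} : Set X)ᶜ}) {z : X | z ∉ ({x, y} : Set X)} f ≤ (chg \ C).ncard :=
      le_trans (Nat.sInf_le ⟨Fam1, hsub1, hfin1, rfl, hcov1⟩) hle1
    have hB : chg.ncard = T.parsimony f := by rw [← hgval, changingNumber_eq]
    omega
  -- direction 2 : parsimony ≤ coverNum + 1
  have hne : {n | ∃ Fam, Fam ⊆ ({S : Set X | ∃ S' ∈ T.splits, S = S' \ {x, y}} \
      {∅, ({x, y} : Set X)ᶜ}) ∧ Fam.Finite ∧ Fam.ncard = n ∧
      Covers {z : X | z ∉ ({x, y} : Set X)} f Fam}.Nonempty :=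
    ⟨_, Fam1, hsub1, hfin1, rfl, hcov1⟩
  obtain ⟨Fam, hsub, hfin, hn, hcov⟩ := Nat.sInf_mem hne
  have hlift : ∀ S ∈ Fam, ∃ u v, T.G.Adj u v ∧ T.side u v \ ({x, y} : Set X) = S ∧
      (fun _ : Sym2 T.V => True) s(u,v) := by
    intro S hS
    obtain ⟨⟨S', hS'sp, hSeq⟩, -⟩ := hsub hS
    obtain ⟨u, v, huv, hS'uv⟩ := hS'sp
    exact ⟨u, v, huv, by rw [hS'uv] at hSeq; exact hSeq.symm, trivial⟩
  obtain ⟨E0, hE0fin, hE0le, hE0prop, hE0sep⟩ :=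
    T.cut_of_cover f {x, y} Fam hfin (fun _ => True) hcov hlift
  set E' := insert s(T.leaf x, p) (insert s(T.leaf y, p) E0) with hE'
  have hpxE : s(T.leaf x, p) ∈ E' := Set.mem_insert _ _
  have hpyE : s(T.leaf y, p) ∈ E' := Set.mem_insert_of_mem _ (Set.mem_insert _ _)
  have hsep : ∀ a b : X, f a ≠ f b →
      ¬ (T.G.deleteEdges E').Reachable (T.leaf a) (T.leaf b) := by
    intro a b hab hr
    by_cases hax : a = x
    · subst hax
      exact hab (by rw [T.leaf_inj (T.leaf_isolated hnx E' hpxE hr)])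
    · by_cases hay : a = y
      · subst hay
        exact hab (by rw [T.leaf_inj (T.leaf_isolated hny E' hpyE hr)])
      · by_cases hbx : b = x
        · subst hbx
          exact hab (by rw [T.leaf_inj (T.leaf_isolated hnx E' hpxE hr.symm)])
        · by_cases hby : b = y
          · subst hby
            exact hab (by rw [T.leaf_inj (T.leaf_isolated hny E' hpyE hr.symm)])
          · exact hE0sep E' ((Set.subset_insert _ _).trans (Set.subset_insert _ _)) a b
              (by simp [hax, hay]) (by simp [hbx, hby]) hab hr
  obtain ⟨g2, hext2, hconst2⟩ := T.exists_ext f E' hsep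
  have hbound : T.changingNumber g2 ≤ E0.ncard + 1 := by
    rw [changingNumber_eq]
    by_cases hgp2 : g2 p = f x
    · have hsub2 : {e ∈ T.G.edgeSet | ¬ (Sym2.map g2 e).IsDiag} ⊆
          insert s(T.leaf y, p) E0 := by
        intro e he
        rcases Set.mem_insert_iff.mp (T.changing_subset g2 E' hconst2 he) with heq | hmem
        · exfalso
          rw [heq] at he
          apply he.2
          rw [Sym2.map_pair_eq, Sym2.mk_isDiag_iff, hext2, hgp2]
        · exact hmem
      exact le_trans (Set.ncard_le_ncard hsub2 ((hE0fin.insert _)))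
        (Set.ncard_insert_le _ _)
    · have hgp2' : g2 p = f y := by
        cases h1 : g2 p <;> cases h2 : f x <;> cases h3 : f y <;> simp_all
      have hsub2 : {e ∈ T.G.edgeSet | ¬ (Sym2.map g2 e).IsDiag} ⊆
          insert s(T.leaf x, p) E0 := by
        intro e he
        have hmem := T.changing_subset g2 E' hconst2 he
        rcases Set.mem_insert_iff.mp hmem with heq | hmem2
        · exact Set.mem_insert_iff.mpr (Or.inl heq)
        · rcases Set.mem_insert_iff.mp hmem2 with heq | hmem3
          · exfalso
            rw [heq] at he
            apply he.2
            rw [Sym2.map_pair_eq, Sym2.mk_isDiag_iff, hext2, hgp2']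
          · exact Set.mem_insert_of_mem _ hmem3
      exact le_trans (Set.ncard_le_ncard hsub2 ((hE0fin.insert _)))
        (Set.ncard_insert_le _ _)
  have hd2 : T.parsimony f ≤
      coverNum ({S : Set X | ∃ S' ∈ T.splits, S = S' \ {x, y}} \
        {∅, ({x, y} : Set X)ᶜ}) {z : X | z ∉ ({x, y} : Set X)} f + 1 := by
    calc T.parsimony f ≤ T.changingNumber g2 := T.parsimony_le f g2 hext2
      _ ≤ E0.ncard + 1 := hbound
      _ ≤ Fam.ncard + 1 := by omega
      _ = _ := by rw [hn]; rfl
  omega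

end PhyloTree

section Assembly
variable {X : Type*}

lemma red1_parsimony_eq (T : PhyloTree X) {x y : X} (hc : T.IsCherry x y)
    (T1 : PhyloTree {z : X // z ≠ x}) (h1 : IsRed1 T x y T1)
    (f : X → Bool) (hf : f x = f y) :
    T.parsimony f = T1.parsimony (fun z => f z.val) := by
  have hP : {z : X | z ∉ ({x} : Set X)} =
      Set.range (Subtype.val : {z : X // z ≠ x} → X) := by
    rw [Subtype.range_coe_subtype]
    ext z; simp
  rw [T.parsimony_red1 hc f hf, ← h1.2, hP,
    coverNum_image Subtype.val Subtype.val_injective T1.splits f,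
    T1.parsimony_eq_coverNum]

lemma red2_parsimony_eq (T : PhyloTree X) {x y : X} (hc : T.IsCherry x y)
    (T2 : PhyloTree {z : X // z ≠ x ∧ z ≠ y}) (h2 : IsRed2 T x y T2)
    (f : X → Bool) (hf : f x ≠ f y) :
    T.parsimony f = T2.parsimony (fun z => f z.val) + 1 := by
  have hP : {z : X | z ∉ ({x, y} : Set X)} =
      Set.range (Subtype.val : {z : X // z ≠ x ∧ z ≠ y} → X) := by
    rw [Subtype.range_coe_subtype]
    ext z; simp
  rw [T.parsimony_red2 hc f hf, ← h2.2, hP,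
    coverNum_image Subtype.val Subtype.val_injective T2.splits f,
    T2.parsimony_eq_coverNum]

end Assembly

/-- if `T'` is an NNI neighbor of `T`, `[x,y]` is a cherry of both
trees, and the type-1 and type-2 cherry reductions of the two trees satisfy
`A_k(T¹) = A_k(T̃¹)` and `A_{k-1}(T²) = A_{k-1}(T̃²)`, then `A_k(T) = A_k(T̃)`. -/
theorem stmt_9 {X : Type*} [Fintype X] (k : ℕ) (hk : 2 ≤ k)
    (T T' : PhyloTree X) (hNNI : IsNNINeighbor T T') (x y : X)
    (hcherry : T.IsCherry x y) (hcherry' : T'.IsCherry x y)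
    (T1 : PhyloTree {z : X // z ≠ x}) (T1' : PhyloTree {z : X // z ≠ x})
    (T2 : PhyloTree {z : X // z ≠ x ∧ z ≠ y}) (T2' : PhyloTree {z : X // z ≠ x ∧ z ≠ y})
    (h1 : IsRed1 T x y T1) (h1' : IsRed1 T' x y T1')
    (h2 : IsRed2 T x y T2) (h2' : IsRed2 T' x y T2')
    (hA1 : T1.Ak k = T1'.Ak k) (hA2 : T2.Ak (k - 1) = T2'.Ak (k - 1)) :
    T.Ak k = T'.Ak k := by
  ext f
  simp only [PhyloTree.Ak, Set.mem_setOf_eq]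
  by_cases hf : f x = f y
  · rw [red1_parsimony_eq T hcherry T1 h1 f hf,
      red1_parsimony_eq T' hcherry' T1' h1' f hf]
    have := Set.ext_iff.mp hA1 (fun z => f z.val)
    simpa only [PhyloTree.Ak, Set.mem_setOf_eq] using this
  · rw [red2_parsimony_eq T hcherry T2 h2 f hf,
      red2_parsimony_eq T' hcherry' T2' h2' f hf]
    have := Set.ext_iff.mp hA2 (fun z => f z.val)
    simp only [PhyloTree.Ak, Set.mem_setOf_eq] at this
    omega
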